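/- Let φ : k[x,s,t,u,v] → k[x,v,t,u] be the k-algebra map substituting s ↦ xv (i.e., φ(f)(x,v,t,u) = f(x,xv,t,u,v)), and let Δ' = x^2 ∂/∂v + xv ∂/∂t + t ∂/∂u on k[x,v,t,u]. Then Δ' ∘ φ = φ ∘ D, where D = x^3 ∂/∂s + s ∂/∂t + t ∂/∂u + x^2 ∂/∂v. In particular φ maps ker D into ker Δ'. -/

import Mathlib

open MvPolynomial

theorem daigle_freudenburg_phi_equivariant
    (K : Type*) [Field K] [CharZero K]
    (D : Derivation K (MvPolynomial (Fin 5) K) (MvPolynomial (Fin 5) K))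
    (hx : D (X 0) = 0) (hs : D (X 1) = X 0 ^ 3) (ht : D (X 2) = X 1)
    (hu : D (X 3) = X 2) (hv : D (X 4) = X 0 ^ 2)
    (Δ' : Derivation K (MvPolynomial (Fin 4) K) (MvPolynomial (Fin 4) K))
    (hΔx : Δ' (X 0) = 0) (hΔv : Δ' (X 1) = X 0 ^ 2)
    (hΔt : Δ' (X 2) = X 0 * X 1) (hΔu : Δ' (X 3) = X 2)
    (φ : MvPolynomial (Fin 5) K →ₐ[K] MvPolynomial (Fin 4) K)
    (hφ : φ = aeval ![X 0, X 0 * X 1, X 2, X 3, X 1]) :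
    (∀ f : MvPolynomial (Fin 5) K, Δ' (φ f) = φ (D f)) ∧
    (∀ f : MvPolynomial (Fin 5) K, D f = 0 → Δ' (φ f) = 0) := by
  have key : ∀ i : Fin 5, Δ' (φ (X i)) = φ (D (X i)) := by
    intro i
    fin_cases i <;>
      simp [hφ, hx, hs, ht, hu, hv, hΔx, hΔv, hΔt, hΔu, map_pow] <;> try ring
  have main : ∀ f : MvPolynomial (Fin 5) K, Δ' (φ f) = φ (D f) := by
    intro f
    induction f using MvPolynomial.induction_on with
    | C a => simp
    | add p q hp hq => simp [hp, hq]
    | mul_X p i hp =>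
      simp only [map_mul, Derivation.leibniz, smul_eq_mul, map_add, hp, key]
      try ring
  exact ⟨main, fun f hf => by rw [main, hf, map_zero]⟩
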